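/- Let E be an r×n real matrix, f ∈ ℝ^r, and W = {ξ ∈ ℝⁿ : Eξ ≤ f}. Let m ∈ ℕ, let γ_1,…,γ_m ≥ 0 with Σ_j γ_j = 1, let μ_1,…,μ_m ∈ ℝⁿ, and let S_1,…,S_m be n×n real symmetric matrices. Fix a ∈ ℝⁿ, d ∈ ℝ, and ε ∈ (0,1). Suppose there exist β ∈ ℝ and, for each j, t_j ∈ ℝ, ω_j ∈ ℝⁿ, an n×n symmetric matrix Ω_j, and φ_j, ψ_j ∈ ℝ^r with φ_j ≥ 0, ψ_j ≥ 0 componentwise, such that: (i) ε·β + Σ_j γ_j ( t_j + μ_jᵀω_j + S_j • Ω_j ) ≤ 0; (ii) the block matrix [[Ω_j, ½(ω_j + Eᵀφ_j)], [½(ω_j + Eᵀφ_j)ᵀ, t_j − fᵀφ_j]] is positive semidefinite for each j; and (iii) the block matrix [[Ω_j, ½(ω_j − a + Eᵀψ_j)], [½(ω_j − a + Eᵀψ_j)ᵀ, t_j + β − d − fᵀψ_j]] is positive semidefinite for each j. Then for every family of Borel probability measures ρ_1,…,ρ_m on ℝⁿ with ρ_j(W) = 1, ∫ ξ dρ_j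 = μ_j and S_j − ∫ ξξᵀ dρ_j positive semidefinite for each j, the mixture P = Σ_j γ_j ρ_j satisfies CVaR_ε^P(ξ ↦ a·ξ + d) ≤ 0, where CVaR_ε^P(L) = inf_{β'∈ℝ} { β' + ε⁻¹ ∫ (L(ξ) − β')⁺ dP(ξ) } and M • Ω denotes the Frobenius inner product trace(MᵀΩ). -/

import Mathlib

open Matrix MeasureTheory

lemma trace_nonneg_of_psd' {k : Type*} [Fintype k] {M : Matrix k k ℝ} (h : M.PosSemidef) :
    0 ≤ M.trace := by
  classical
  refine Finset.sum_nonneg fun i _ => ?_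
  have := h.dotProduct_mulVec_nonneg (Pi.single i 1)
  simpa [dotProduct, Matrix.mulVec, Pi.single_apply] using this

open scoped MatrixOrder in
lemma trace_mul_nonneg_of_psd' {k : Type*} [Fintype k] [DecidableEq k]
    {A B : Matrix k k ℝ} (hA : A.PosSemidef) (hB : B.PosSemidef) :
    0 ≤ (A * B).trace := by
  have key : (A * B).trace = (CFC.sqrt B * A * CFC.sqrt B).trace := by
    conv_lhs => rw [← CFC.sqrt_mul_sqrt_self B hB.nonneg]
    rw [← mul_assoc, trace_mul_comm, ← mul_assoc]
  rw [key]
  have hP : (CFC.sqrt B * A * CFC.sqrt B).PosSemidef := by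
    have := hA.conjTranspose_mul_mul_same (CFC.sqrt B)
    rwa [(CFC.sqrt_nonneg B).posSemidef.isHermitian.eq] at this
  exact trace_nonneg_of_psd' hP

lemma quad_nonneg' {k : Type*} [Fintype k] {Q : Matrix k k ℝ} {b : k → ℝ} {c : ℝ}
    (h : (Matrix.fromBlocks Q
        (Matrix.of fun i (_ : Unit) => b i / 2)
        (Matrix.of fun (_ : Unit) i => b i / 2)
        (Matrix.of fun (_ : Unit) (_ : Unit) => c)).PosSemidef)
    (ξ : k → ℝ) : 0 ≤ ξ ⬝ᵥ (Q *ᵥ ξ) + b ⬝ᵥ ξ + c := by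
  have h2 := h.dotProduct_mulVec_nonneg (Sum.elim ξ fun _ => (1 : ℝ))
  simp only [star_trivial, dotProduct, Matrix.mulVec, Fintype.sum_sum_type,
    Sum.elim_inl, Sum.elim_inr, Matrix.fromBlocks_apply₁₁, Matrix.fromBlocks_apply₁₂,
    Matrix.fromBlocks_apply₂₁, Matrix.fromBlocks_apply₂₂, Matrix.of_apply,
    Fintype.sum_unique, mul_one, one_mul] at h2
  simp only [dotProduct, Matrix.mulVec]
  have e1 : ∀ i, ξ i * (∑ j, Q i j * ξ j + b i / 2)
      = ξ i * (∑ j, Q i j * ξ j) + ξ i * (b i / 2) := fun i => by ring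
  rw [Finset.sum_congr rfl fun i _ => e1 i, Finset.sum_add_distrib] at h2
  have e2 : ∑ i, ξ i * (b i / 2) = (∑ i, b i * ξ i) / 2 := by
    rw [Finset.sum_div]; exact Finset.sum_congr rfl fun i _ => by ring
  have e3 : ∑ j, b j / 2 * ξ j = (∑ i, b i * ξ i) / 2 := by
    rw [Finset.sum_div]; exact Finset.sum_congr rfl fun i _ => by ring
  rw [e2, e3] at h2
  linarith

lemma psd_block_topleft' {k l : Type*} [Fintype k] [Fintype l]
    {Q : Matrix k k ℝ} {B : Matrix k l ℝ} {C : Matrix l k ℝ} {D : Matrix l l ℝ}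
    (h : (Matrix.fromBlocks Q B C D).PosSemidef) : Q.PosSemidef := by
  have hQ : Q = (Matrix.fromBlocks Q B C D).submatrix Sum.inl Sum.inl := by
    ext i j; rfl
  rw [hQ]; exact h.submatrix _

theorem lmi_certifies_dr_cvar {n r m : ℕ}
    (E : Matrix (Fin r) (Fin n) ℝ) (f : Fin r → ℝ)
    (γ : Fin m → ℝ) (hγ : ∀ j, 0 ≤ γ j) (hγsum : ∑ j, γ j = 1)
    (μ : Fin m → Fin n → ℝ)
    (S : Fin m → Matrix (Fin n) (Fin n) ℝ) (hSsymm : ∀ j, (S j).IsSymm)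
    (a : Fin n → ℝ) (d : ℝ) (ε : ℝ) (hε : ε ∈ Set.Ioo (0 : ℝ) 1)
    (β : ℝ) (t : Fin m → ℝ) (ω : Fin m → Fin n → ℝ)
    (Ω : Fin m → Matrix (Fin n) (Fin n) ℝ) (hΩsymm : ∀ j, (Ω j).IsSymm)
    (φ ψ : Fin m → Fin r → ℝ)
    (hφ : ∀ j i, 0 ≤ φ j i) (hψ : ∀ j i, 0 ≤ ψ j i)
    (hobj : ε * β + ∑ j, γ j * (t j + μ j ⬝ᵥ ω j + ((S j)ᵀ * Ω j).trace) ≤ 0)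
    (hLMI1 : ∀ j, (Matrix.fromBlocks (Ω j)
        (Matrix.of fun i (_ : Unit) => (ω j + Eᵀ *ᵥ φ j) i / 2)
        (Matrix.of fun (_ : Unit) i => (ω j + Eᵀ *ᵥ φ j) i / 2)
        (Matrix.of fun (_ : Unit) (_ : Unit) => t j - f ⬝ᵥ φ j)).PosSemidef)
    (hLMI2 : ∀ j, (Matrix.fromBlocks (Ω j)
        (Matrix.of fun i (_ : Unit) => (ω j - a + Eᵀ *ᵥ ψ j) i / 2)
        (Matrix.of fun (_ : Unit) i => (ω j - a + Eᵀ *ᵥ ψ j) i / 2)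
        (Matrix.of fun (_ : Unit) (_ : Unit) => t j + β - d - f ⬝ᵥ ψ j)).PosSemidef) :
    ∀ ρ : Fin m → Measure (Fin n → ℝ),
      (∀ j, IsProbabilityMeasure (ρ j)) →
      (∀ j, ρ j {ξ | ∀ i, (E *ᵥ ξ) i ≤ f i} = 1) →
      (∀ j i, Integrable (fun ξ => ξ i) (ρ j)) →
      (∀ j i, ∫ ξ, ξ i ∂(ρ j) = μ j i) →
      (∀ j i i', Integrable (fun ξ => ξ i * ξ i') (ρ j)) →
      (∀ j, (S j - Matrix.of fun i i' => ∫ ξ, ξ i * ξ i' ∂(ρ j)).PosSemidef) →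
      (⨅ β' : ℝ, β' + ε⁻¹ *
          ∫ ξ, max (a ⬝ᵥ ξ + d - β') 0
            ∂(∑ j, ENNReal.ofReal (γ j) • ρ j)) ≤ 0 := by
  obtain ⟨hε0, hε1⟩ := hε
  intro ρ hprob hW hint1 hmean hint2 hcov
  -- the feasible set
  set W : Set (Fin n → ℝ) := {ξ | ∀ i, (E *ᵥ ξ) i ≤ f i} with hWdef
  -- the quadratic certificate functions
  set g : Fin m → (Fin n → ℝ) → ℝ :=
    fun j ξ => (∑ i, ∑ i', Ω j i i' * (ξ i * ξ i')) + ((∑ i, ω j i * ξ i) + t j) with hgdef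
  have hEdot : ∀ (v : Fin r → ℝ) (ξ : Fin n → ℝ), (Eᵀ *ᵥ v) ⬝ᵥ ξ = v ⬝ᵥ (E *ᵥ ξ) := by
    intro v ξ
    rw [Matrix.mulVec_transpose, ← dotProduct_mulVec]
  have hquad : ∀ j ξ, ξ ⬝ᵥ (Ω j *ᵥ ξ) + ω j ⬝ᵥ ξ + t j = g j ξ := by
    intro j ξ
    have e : ∀ i, ξ i * ∑ i', Ω j i i' * ξ i' = ∑ i', Ω j i i' * (ξ i * ξ i') := fun i => by
      rw [Finset.mul_sum]; exact Finset.sum_congr rfl fun i' _ => by ring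
    simp only [hgdef, dotProduct, Matrix.mulVec]
    rw [Finset.sum_congr rfl fun i _ => e i]
    ring
  have hg0 : ∀ j, ∀ ξ ∈ W, 0 ≤ g j ξ := by
    intro j ξ hξ
    have h1 := quad_nonneg' (hLMI1 j) ξ
    rw [add_dotProduct, hEdot] at h1
    have h2 : φ j ⬝ᵥ (E *ᵥ ξ) ≤ φ j ⬝ᵥ f :=
      Finset.sum_le_sum fun i _ => mul_le_mul_of_nonneg_left (hξ i) (hφ j i)
    have h3 : φ j ⬝ᵥ f = f ⬝ᵥ φ j := dotProduct_comm _ _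
    have h4 := hquad j ξ
    linarith
  have hglin : ∀ j, ∀ ξ ∈ W, a ⬝ᵥ ξ + d - β ≤ g j ξ := by
    intro j ξ hξ
    have h1 := quad_nonneg' (hLMI2 j) ξ
    rw [add_dotProduct, sub_dotProduct, hEdot] at h1
    have h2 : ψ j ⬝ᵥ (E *ᵥ ξ) ≤ ψ j ⬝ᵥ f :=
      Finset.sum_le_sum fun i _ => mul_le_mul_of_nonneg_left (hξ i) (hψ j i)
    have h3 : ψ j ⬝ᵥ f = f ⬝ᵥ ψ j := dotProduct_comm _ _
    have h4 := hquad j ξ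
    linarith
  -- integrability of g j
  have hgint : ∀ j, Integrable (g j) (ρ j) := by
    intro j
    apply Integrable.add
    · exact integrable_finset_sum _ fun i _ =>
        integrable_finset_sum _ fun i' _ => (hint2 j i i').const_mul _
    · exact (integrable_finset_sum _ fun i _ => (hint1 j i).const_mul _).add
        (integrable_const _)
  -- continuity helpers
  have contDot : ∀ c : Fin n → ℝ, Continuous fun ξ : Fin n → ℝ => c ⬝ᵥ ξ := by
    intro c
    simp only [dotProduct]
    exact continuous_finset_sum _ fun i _ => continuous_const.mul (continuous_apply i)
  have hWmeas : MeasurableSet W := by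
    have hWe : W = ⋂ i, {ξ : Fin n → ℝ | (E *ᵥ ξ) i ≤ f i} := by
      ext ξ; simp [hWdef, Set.mem_iInter]
    rw [hWe]
    refine MeasurableSet.iInter fun i => ?_
    have : Continuous fun ξ : Fin n → ℝ => (E *ᵥ ξ) i := by
      simp only [Matrix.mulVec, dotProduct]
      exact continuous_finset_sum _ fun i' _ => continuous_const.mul (continuous_apply i')
    exact measurableSet_le this.measurable measurable_const
  have hWae : ∀ j, ∀ᵐ ξ ∂(ρ j), ξ ∈ W := by
    intro j
    have hc : ρ j Wᶜ = 0 := by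
      have := hprob j
      rw [measure_compl hWmeas (measure_ne_top _ _), hW j, measure_univ, tsub_self]
    exact MeasureTheory.mem_ae_iff.mpr hc
  -- the CVaR integrand at β
  set F : (Fin n → ℝ) → ℝ := fun ξ => max (a ⬝ᵥ ξ + d - β) 0 with hFdef
  have hFcont : Continuous F :=
    (((contDot a).add continuous_const).sub continuous_const).max continuous_const
  have hFint : ∀ j, Integrable F (ρ j) := by
    intro j
    refine (hgint j).mono' hFcont.aestronglyMeasurable ?_
    filter_upwards [hWae j] with ξ hξ
    rw [Real.norm_of_nonneg (le_max_right _ _)]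
    exact max_le (hglin j ξ hξ) (hg0 j ξ hξ)
  -- bound the integral of F under each ρ j
  have hFle : ∀ j, ∫ ξ, F ξ ∂(ρ j) ≤ t j + μ j ⬝ᵥ ω j + ((S j)ᵀ * Ω j).trace := by
    intro j
    have hprobj := hprob j
    have hstep : ∫ ξ, F ξ ∂(ρ j) ≤ ∫ ξ, g j ξ ∂(ρ j) := by
      refine integral_mono_ae (hFint j) (hgint j) ?_
      filter_upwards [hWae j] with ξ hξ
      exact max_le (hglin j ξ hξ) (hg0 j ξ hξ)
    have hgval : ∫ ξ, g j ξ ∂(ρ j)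
        = (∑ i, ∑ i', Ω j i i' * ∫ ξ, ξ i * ξ i' ∂(ρ j)) + (ω j ⬝ᵥ μ j + t j) := by
      simp only [hgdef]
      have hA : Integrable (fun ξ : Fin n → ℝ => ∑ i, ∑ i', Ω j i i' * (ξ i * ξ i')) (ρ j) :=
        integrable_finset_sum _ fun i _ =>
          integrable_finset_sum _ fun i' _ => (hint2 j i i').const_mul _
      have hB : Integrable (fun ξ : Fin n → ℝ => (∑ i, ω j i * ξ i) + t j) (ρ j) :=
        (integrable_finset_sum _ fun i _ => (hint1 j i).const_mul _).add (integrable_const _)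
      have hB1 : Integrable (fun ξ : Fin n → ℝ => ∑ i, ω j i * ξ i) (ρ j) :=
        integrable_finset_sum _ fun i _ => (hint1 j i).const_mul _
      rw [integral_add hA hB, integral_add hB1 (integrable_const _)]
      congr 1
      · rw [integral_finset_sum _ fun i _ =>
          integrable_finset_sum _ fun i' _ => (hint2 j i i').const_mul (Ω j i i')]
        exact Finset.sum_congr rfl fun i _ => by
          rw [integral_finset_sum _ fun i' _ => (hint2 j i i').const_mul (Ω j i i')]
          exact Finset.sum_congr rfl fun i' _ => integral_const_mul _ _
      congr 1
      · rw [integral_finset_sum _ fun i _ => (hint1 j i).const_mul (ω j i)]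
        simp only [dotProduct]
        exact Finset.sum_congr rfl fun i _ => by
          rw [integral_const_mul, hmean j i]
      · simp
    have htr : (∑ i, ∑ i', Ω j i i' * ∫ ξ, ξ i * ξ i' ∂(ρ j)) ≤ ((S j)ᵀ * Ω j).trace := by
      set Me : Matrix (Fin n) (Fin n) ℝ :=
        Matrix.of fun i i' => ∫ ξ, ξ i * ξ i' ∂(ρ j) with hMe
      have hΩpsd : (Ω j).PosSemidef := psd_block_topleft' (hLMI1 j)
      have h0 : 0 ≤ ((S j - Me) * Ω j).trace :=
        trace_mul_nonneg_of_psd' (hcov j) hΩpsd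
      have hMesymm : ∀ i i', Me i i' = Me i' i := by
        intro i i'
        simp only [hMe, Matrix.of_apply]
        exact integral_congr_ae (Filter.Eventually.of_forall fun ξ => mul_comm _ _)
      have key : ((S j - Me) * Ω j).trace
          = ((S j)ᵀ * Ω j).trace - ∑ i, ∑ i', Ω j i i' * Me i i' := by
        simp only [Matrix.trace, Matrix.diag, Matrix.mul_apply, Matrix.sub_apply,
          Matrix.transpose_apply, sub_mul, Finset.sum_sub_distrib]
        congr 1
        · refine Finset.sum_congr rfl fun i _ => Finset.sum_congr rfl fun k _ => ?_
          rw [(hSsymm j).apply k i]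
        · rw [Finset.sum_comm]
          refine Finset.sum_congr rfl fun i _ => Finset.sum_congr rfl fun k _ => ?_
          rw [hMesymm k i]; ring
      have hfin : ∑ i, ∑ i', Ω j i i' * Me i i' ≤ ((S j)ᵀ * Ω j).trace := by linarith
      simpa [hMe] using hfin
    have hdotcomm : ω j ⬝ᵥ μ j = μ j ⬝ᵥ ω j := dotProduct_comm _ _
    linarith
  -- assemble the mixture bound
  have hPint : (∫ ξ, F ξ ∂(∑ j, ENNReal.ofReal (γ j) • ρ j))
      = ∑ j, γ j * ∫ ξ, F ξ ∂(ρ j) := by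
    rw [integral_finset_sum_measure fun j _ => (hFint j).smul_measure ENNReal.ofReal_ne_top]
    exact Finset.sum_congr rfl fun j _ => by
      rw [integral_smul_measure, ENNReal.toReal_ofReal (hγ j), smul_eq_mul]
  have hsum : ∑ j, γ j * ∫ ξ, F ξ ∂(ρ j)
      ≤ ∑ j, γ j * (t j + μ j ⬝ᵥ ω j + ((S j)ᵀ * Ω j).trace) :=
    Finset.sum_le_sum fun j _ => mul_le_mul_of_nonneg_left (hFle j) (hγ j)
  have hval : β + ε⁻¹ * ∫ ξ, max (a ⬝ᵥ ξ + d - β) 0 ∂(∑ j, ENNReal.ofReal (γ j) • ρ j) ≤ 0 := by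
    have h1 : (∫ ξ, F ξ ∂(∑ j, ENNReal.ofReal (γ j) • ρ j)) ≤ -(ε * β) := by
      rw [hPint]; linarith
    have h2 : ε⁻¹ * (∫ ξ, F ξ ∂(∑ j, ENNReal.ofReal (γ j) • ρ j)) ≤ ε⁻¹ * (-(ε * β)) :=
      mul_le_mul_of_nonneg_left h1 (inv_nonneg.mpr hε0.le)
    have h3 : ε⁻¹ * (-(ε * β)) = -β := by field_simp
    have h4 : (∫ ξ, max (a ⬝ᵥ ξ + d - β) 0 ∂(∑ j, ENNReal.ofReal (γ j) • ρ j))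
        = ∫ ξ, F ξ ∂(∑ j, ENNReal.ofReal (γ j) • ρ j) := rfl
    rw [h4]; linarith
  by_cases hbdd : BddBelow (Set.range fun β' : ℝ => β' + ε⁻¹ *
      ∫ ξ, max (a ⬝ᵥ ξ + d - β') 0 ∂(∑ j, ENNReal.ofReal (γ j) • ρ j))
  · exact le_trans (ciInf_le hbdd β) hval
  · rw [Real.iInf_of_not_bddBelow hbdd]
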